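/- Let g, h ≥ 1, τ ∈ M_g(ℂ) with det(Im τ) ≠ 0 and σ ∈ M_h(ℂ) with det(Im σ) ≠ 0. Suppose M ∈ M_{h×g}(ℂ) and R ∈ M_{2h×2g}(ℤ) satisfy M·Π(τ) = Π(σ)·R, and suppose M is surjective as a ℂ-linear map ℂ^g → ℂ^h (i.e. the corresponding homomorphism X_τ → X_σ is surjective). Then every entry of σ lies in F_τ; that is, F_σ ⊆ F_τ, and in particular [F_σ : ℚ] ≤ [F_τ : ℚ]. -/

import Mathlib

open Matrix Module IntermediateField
open scoped ComplexOrder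

noncomputable section

/-- The period matrix `Π(τ) = (τ | I_g)`, a `g × 2g` complex matrix. -/
def PeriodMatrix (g : ℕ) (τ : Matrix (Fin g) (Fin g) ℂ) :
    Matrix (Fin g) (Fin g ⊕ Fin g) ℂ :=
  Matrix.fromCols τ 1

/-- `F_τ`: the subfield of `ℂ` generated over `ℚ` by the entries of `τ`. -/
def EntryField (g : ℕ) (τ : Matrix (Fin g) (Fin g) ℂ) : IntermediateField ℚ ℂ :=
  IntermediateField.adjoin ℚ {x : ℂ | ∃ i j, τ i j = x}

lemma mulVecLin_surjective_descent {m n : Type*} [Fintype m] [Fintype n]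
    {K L : Type*} [Field K] [Field L] [Algebra K L]
    (A : Matrix m n K)
    (hs : Function.Surjective (A.map (algebraMap K L)).mulVecLin) :
    Function.Surjective A.mulVecLin := by
  set f := algebraMap K L
  have hrankL : (A.map f).rank = Fintype.card m := by
    rw [Matrix.rank, LinearMap.range_eq_top.mpr hs, finrank_top, finrank_pi]
  have hT : ((A.map f)ᵀ).rank = Fintype.card m := by
    rw [Matrix.rank_transpose, hrankL]
  have hkerT : LinearMap.ker ((A.map f)ᵀ).mulVecLin = ⊥ := by
    have h2 := LinearMap.finrank_range_add_finrank_ker ((A.map f)ᵀ).mulVecLin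
    rw [show finrank L ↥(LinearMap.range ((A.map f)ᵀ).mulVecLin) = Fintype.card m from hT,
      finrank_pi] at h2
    exact Submodule.finrank_eq_zero.1 (by omega)
  have hinj : Function.Injective (Aᵀ).mulVecLin := by
    rw [← LinearMap.ker_eq_bot, LinearMap.ker_eq_bot']
    intro v hv
    have hv' : (A.map f)ᵀ.mulVecLin (f ∘ v) = 0 := by
      funext i
      have h0 := (RingHom.map_mulVec f Aᵀ v i).symm
      rw [Matrix.transpose_map] at h0
      simp only [mulVecLin_apply] at hv ⊢
      rw [h0, hv]
      simp
    have : f ∘ v = 0 := by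
      have := hkerT ▸ LinearMap.mem_ker.mpr hv'
      simpa using this
    funext i
    have : f (v i) = 0 := congrFun this i
    have hfi : Function.Injective f := f.injective
    simpa using hfi (by simpa using this)
  have hrankKT : Aᵀ.rank = Fintype.card m := by
    have h2 := LinearMap.finrank_range_add_finrank_ker (Aᵀ).mulVecLin
    rw [LinearMap.ker_eq_bot.mpr hinj, finrank_bot, add_zero, finrank_pi] at h2
    rw [Matrix.rank, h2]
  have hrankK : A.rank = Fintype.card m := by rw [← Matrix.rank_transpose, hrankKT]
  rw [← LinearMap.range_eq_top]
  apply Submodule.eq_top_of_finrank_eq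
  rw [show finrank K ↥(LinearMap.range A.mulVecLin) = Fintype.card m from hrankK, finrank_pi]

theorem entryField_ge_of_surjective
    (g h : ℕ) (hg : 1 ≤ g) (hh : 1 ≤ h)
    (τ : Matrix (Fin g) (Fin g) ℂ) (σ : Matrix (Fin h) (Fin h) ℂ)
    (hτ : (τ.map Complex.im).det ≠ 0) (hσ : (σ.map Complex.im).det ≠ 0)
    (M : Matrix (Fin h) (Fin g) ℂ) (R : Matrix (Fin h ⊕ Fin h) (Fin g ⊕ Fin g) ℤ)
    (hMR : M * PeriodMatrix g τ = PeriodMatrix h σ * R.map (Int.cast : ℤ → ℂ))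
    (hsurj : Function.Surjective M.mulVecLin) :
    EntryField h σ ≤ EntryField g τ := by
  classical
  set K := EntryField g τ with hKdef
  have hτK : ∀ i j, τ i j ∈ K := fun i j => IntermediateField.subset_adjoin ℚ _ ⟨i, j, rfl⟩
  set c : ℂ →+* ℂ := (starRingEnd ℂ) with hc
  -- blocks of R over ℂ
  set A' : Matrix (Fin h) (Fin g) ℂ := (R.toBlocks₁₁).map (Int.cast : ℤ → ℂ) with hA'
  set B' : Matrix (Fin h) (Fin g) ℂ := (R.toBlocks₁₂).map (Int.cast : ℤ → ℂ) with hB'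
  set C' : Matrix (Fin h) (Fin g) ℂ := (R.toBlocks₂₁).map (Int.cast : ℤ → ℂ) with hC'
  set D' : Matrix (Fin h) (Fin g) ℂ := (R.toBlocks₂₂).map (Int.cast : ℤ → ℂ) with hD'
  have hRblocks : R.map (Int.cast : ℤ → ℂ) = fromBlocks A' B' C' D' := by
    rw [hA', hB', hC', hD', ← Matrix.fromBlocks_map, Matrix.fromBlocks_toBlocks]
  have hMR' : fromCols (M * τ) M = fromCols (σ * A' + C') (σ * B' + D') := by
    have h0 := hMR
    rw [PeriodMatrix, PeriodMatrix, Matrix.mul_fromCols, hRblocks,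
      Matrix.fromCols_mul_fromBlocks] at h0
    simpa using h0
  obtain ⟨eq1, eq2⟩ := (Matrix.fromCols_inj.eq_iff).mp hMR'
  -- conjugate equations
  have hA'c : A'.map c = A' := by ext i j; simp [hA', Matrix.map_apply]
  have hB'c : B'.map c = B' := by ext i j; simp [hB', Matrix.map_apply]
  have hC'c : C'.map c = C' := by ext i j; simp [hC', Matrix.map_apply]
  have hD'c : D'.map c = D' := by ext i j; simp [hD', Matrix.map_apply]
  have eq3 : (M.map c) * (τ.map c) = (σ.map c) * A' + C' := by
    have h0 := congrArg (fun X => X.map c) eq1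
    simpa [Matrix.map_mul, Matrix.map_add, hA'c, hC'c] using h0
  have eq4 : M.map c = (σ.map c) * B' + D' := by
    have h0 := congrArg (fun X => X.map c) eq2
    simpa [Matrix.map_mul, Matrix.map_add, hB'c, hD'c] using h0
  set N : Matrix (Fin h) (Fin g) ℂ := A' - B' * τ with hN
  set E : Matrix (Fin h) (Fin g) ℂ := D' * τ - C' with hE
  have hσA : σ * A' = M * τ - C' := eq_sub_of_add_eq eq1.symm
  have hσB : σ * B' = M - D' := eq_sub_of_add_eq eq2.symm
  have hσcA : (σ.map c) * A' = (M.map c) * (τ.map c) - C' := eq_sub_of_add_eq eq3.symm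
  have hσcB : (σ.map c) * B' = (M.map c) - D' := eq_sub_of_add_eq eq4.symm
  have idσ : σ * N = E := by
    rw [hN, Matrix.mul_sub, ← Matrix.mul_assoc, hσA, hσB, hE, Matrix.sub_mul]
    abel
  have key : (σ.map c - σ) * N = (M.map c) * (τ.map c - τ) := by
    rw [Matrix.sub_mul, idσ, hN, Matrix.mul_sub, ← Matrix.mul_assoc, hσcA, hσcB,
      Matrix.mul_sub, hE, Matrix.sub_mul]
    abel
  -- invertibility of conj-differences
  have hconj : ∀ z : ℂ, c z - z = (-(2 * Complex.I)) * (z.im : ℂ) := by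
    intro z
    have h0 := Complex.sub_conj z
    have : c z - z = -(z - (starRingEnd ℂ) z) := by rw [hc]; ring
    rw [this, h0]
    push_cast
    ring
  have hσdiff : σ.map c - σ = (-(2 * Complex.I)) • ((σ.map Complex.im).map (Complex.ofReal)) := by
    ext i j
    simp only [Matrix.sub_apply, Matrix.map_apply, Matrix.smul_apply, smul_eq_mul]
    exact hconj (σ i j)
  have hτdiff : τ.map c - τ = (-(2 * Complex.I)) • ((τ.map Complex.im).map (Complex.ofReal)) := by
    ext i j
    simp only [Matrix.sub_apply, Matrix.map_apply, Matrix.smul_apply, smul_eq_mul]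
    exact hconj (τ i j)
  have hdetmap : ∀ {k : ℕ} (X : Matrix (Fin k) (Fin k) ℝ),
      ((X.map (Complex.ofReal)).det) = Complex.ofReal X.det := by
    intro k X
    have h0 := RingHom.map_det Complex.ofRealHom X
    exact h0.symm
  have hσd : IsUnit (σ.map c - σ).det := by
    rw [hσdiff, Matrix.det_smul, hdetmap]
    refine isUnit_iff_ne_zero.mpr (mul_ne_zero (pow_ne_zero _ (by simp [Complex.ext_iff])) ?_)
    simpa using hσ
  have hτd : IsUnit (τ.map c - τ).det := by
    rw [hτdiff, Matrix.det_smul, hdetmap]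
    refine isUnit_iff_ne_zero.mpr (mul_ne_zero (pow_ne_zero _ (by simp [Complex.ext_iff])) ?_)
    simpa using hτ
  -- M.map c is surjective
  have hMc : Function.Surjective (M.map c).mulVecLin := by
    intro y
    obtain ⟨x, hx⟩ := hsurj (fun i => c (y i))
    refine ⟨fun j => c (x j), ?_⟩
    funext i
    have h0 := (RingHom.map_mulVec c M x i).symm
    simp only [mulVecLin_apply] at hx ⊢
    rw [show (fun j => c (x j)) = c ∘ x from rfl, h0, hx]
    simp [hc]
  -- N is surjective over ℂ
  have hNsurj : Function.Surjective N.mulVecLin := by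
    intro y
    obtain ⟨z, hz⟩ := hMc ((σ.map c - σ) *ᵥ y)
    refine ⟨(τ.map c - τ)⁻¹ *ᵥ z, ?_⟩
    simp only [mulVecLin_apply] at hz ⊢
    have hτz : (τ.map c - τ) *ᵥ ((τ.map c - τ)⁻¹ *ᵥ z) = z := by
      rw [Matrix.mulVec_mulVec, Matrix.mul_nonsing_inv _ hτd, Matrix.one_mulVec]
    have h1 : (σ.map c - σ) *ᵥ (N *ᵥ ((τ.map c - τ)⁻¹ *ᵥ z)) = (σ.map c - σ) *ᵥ y := by
      rw [Matrix.mulVec_mulVec, key, ← Matrix.mulVec_mulVec, hτz, hz]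
    have h2 := congrArg (fun w => (σ.map c - σ)⁻¹ *ᵥ w) h1
    simp only [Matrix.mulVec_mulVec, ← Matrix.mul_assoc, Matrix.nonsing_inv_mul _ hσd,
      Matrix.one_mul, Matrix.one_mulVec] at h2
    simpa [Matrix.mulVec_mulVec] using h2
  -- entries of N and E lie in K
  have hintK : ∀ (z : ℤ), ((z : ℂ) ∈ K) := fun z => IntermediateField.intCast_mem K z
  have hNK : ∀ i j, N i j ∈ K := by
    intro i j
    rw [hN]
    simp only [Matrix.sub_apply, Matrix.mul_apply, hA', hB', Matrix.map_apply]
    exact sub_mem (hintK _) (sum_mem (fun k _ => mul_mem (hintK _) (hτK k j)))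
  have hEK : ∀ i j, E i j ∈ K := by
    intro i j
    rw [hE]
    simp only [Matrix.sub_apply, Matrix.mul_apply, hC', hD', Matrix.map_apply]
    exact sub_mem (sum_mem (fun k _ => mul_mem (hintK _) (hτK k j))) (hintK _)
  -- descend N to K
  set Nk : Matrix (Fin h) (Fin g) K := fun i j => ⟨N i j, hNK i j⟩ with hNk
  have hNkmap : Nk.map (algebraMap K ℂ) = N := by
    ext i j
    rfl
  have hNksurj : Function.Surjective Nk.mulVecLin := by
    apply mulVecLin_surjective_descent (L := ℂ)
    rw [hNkmap]
    exact hNsurj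
  -- right inverse of Nk over K
  obtain ⟨X, hX⟩ : ∃ X : Matrix (Fin g) (Fin h) K, Nk * X = 1 := by
    choose x hx using hNksurj
    refine ⟨fun i j => x (Pi.single j 1) i, ?_⟩
    ext i j : 1
    have h0 := congrFun (hx (Pi.single j 1)) i
    simp only [mulVecLin_apply, Matrix.mulVec, dotProduct] at h0
    show ∑ k, Nk i k * x (Pi.single j 1) k = (1 : Matrix (Fin h) (Fin h) K) i j
    simp only [Matrix.mul_apply, Matrix.one_apply]
    rw [h0, Pi.single_apply]
  have hNX : N * (X.map (algebraMap K ℂ)) = 1 := by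
    have h0 := congrArg (fun Y => Y.map (algebraMap K ℂ)) hX
    simp only [Matrix.map_mul, hNkmap] at h0
    rw [h0]
    ext i j
    simp [Matrix.map_apply, Matrix.one_apply, apply_ite]
  have hσeq : σ = E * (X.map (algebraMap K ℂ)) := by
    calc σ = σ * (N * (X.map (algebraMap K ℂ))) := by rw [hNX, Matrix.mul_one]
    _ = (σ * N) * (X.map (algebraMap K ℂ)) := by rw [Matrix.mul_assoc]
    _ = E * (X.map (algebraMap K ℂ)) := by rw [idσ]
  have hσK : ∀ i j, σ i j ∈ K := by
    intro i j
    rw [hσeq]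
    simp only [Matrix.mul_apply, Matrix.map_apply, IntermediateField.algebraMap_apply]
    exact sum_mem (fun k _ => mul_mem (hEK i k) (SetLike.coe_mem _))
  rw [show EntryField h σ = IntermediateField.adjoin ℚ {x : ℂ | ∃ i j, σ i j = x} from rfl]
  rw [IntermediateField.adjoin_le_iff]
  rintro x ⟨i, j, rfl⟩
  exact hσK i j

end
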